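/- Let a, b, c be positive real numbers and let x_a, x_c be real numbers. Let A = (x_a, a), B = (0, b) and C = (x_c, 2*b - c) be points of the Euclidean plane ℝ². If dist A B = a + b, dist B C = b + c and dist A C = a + c, then c = b^2 / (4*a). -/

import Mathlib

theorem stmt_0 (a b c x_a x_c : ℝ) (ha : 0 < a) (hb : 0 < b) (hc : 0 < c)
    (A : EuclideanSpace ℝ (Fin 2)) (B : EuclideanSpace ℝ (Fin 2))
    (C : EuclideanSpace ℝ (Fin 2))
    (hA : A = ![x_a, a]) (hB : B = ![0, b]) (hC : C = ![x_c, 2*b - c])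
    (hAB : dist A B = a + b) (hBC : dist B C = b + c) (hAC : dist A C = a + c) :
    c = b^2 / (4*a) := by
  rw [EuclideanSpace.dist_eq] at hAB hBC hAC
  simp [hA, hB, hC, Fin.sum_univ_two, Real.dist_eq, sq_abs] at hAB hBC hAC
  have h1 : x_a^2 + (a - b)^2 = (a+b)^2 := by
    have := congrArg (·^2) hAB
    simpa [Real.sq_sqrt (by positivity : (0:ℝ) ≤ x_a^2 + (a - b)^2)] using this
  have h2 : x_c^2 + (b - (2*b - c))^2 = (b+c)^2 := by
    have := congrArg (·^2) hBC
    simpa [Real.sq_sqrt (by positivity : (0:ℝ) ≤ x_c^2 + (b - (2*b - c))^2)] using this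
  have h3 : (x_a - x_c)^2 + (a - (2*b - c))^2 = (a+c)^2 := by
    have := congrArg (·^2) hAC
    simpa [Real.sq_sqrt (by positivity : (0:ℝ) ≤ (x_a - x_c)^2 + (a - (2*b - c))^2)] using this
  have ha2 : x_a^2 = 4*a*b := by nlinarith
  have hc2 : x_c^2 = 4*b*c := by nlinarith
  have hx : x_a * x_c = 2*b^2 := by nlinarith
  have key : (4*b^2)*(4*a*c) = (4*b^2)*(b^2) := by
    calc (4*b^2)*(4*a*c) = x_a^2 * x_c^2 := by rw [ha2, hc2]; ring
    _ = (x_a*x_c)^2 := by ring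
    _ = (4*b^2)*(b^2) := by rw [hx]; ring
  have : 4*a*c = b^2 := mul_left_cancel₀ (by positivity) key
  field_simp
  linarith
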